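/- Let h : ℝⁿ → ℝ be continuously differentiable and bounded above on C = {h ≥ 0}, say h(x) ≤ M on C, and let F : ℝⁿ → ℝⁿ be a continuously differentiable closed-loop vector field. Define h̄(x) = e^{−‖F(x)‖²} h(x). Then C = {x : h̄(x) ≥ 0}, {h̄ > 0} = {h > 0}, {h̄ = 0} = {h = 0}, and for all x ∈ C: ∇h̄(x)ᵀF(x) = e^{−‖F(x)‖²}[∇h(x)ᵀF(x) − h(x)·∇(‖F(x)‖²)ᵀF(x)]. Moreover, if ‖∇h(x)‖² ≤ Σ_{k=0}^{N} b_k‖F(x)‖^k and ‖∇(‖F(x)‖²)‖² ≤ Σ_{j=0}^{M₂} c_j‖F(x)‖^j on C with b_k, c_j ≥ 0, then the function x ↦ ∇h̄(x)ᵀF(x) is bounded below on C. -/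

import Mathlib

open Real Set Finset

lemma exp_sq_pow_le (m : ℕ) {t : ℝ} (ht : 0 ≤ t) :
    Real.exp (-t ^ 2) * t ^ m ≤ (Nat.factorial m : ℝ) := by
  have hexp : (t ^ 2) ^ m ≤ m.factorial * Real.exp (t ^ 2) := by
    have := Real.pow_div_factorial_le_exp (x := t ^ 2) (by positivity) m
    have hm : (0 : ℝ) < m.factorial := by positivity
    calc (t ^ 2) ^ m = (t ^ 2) ^ m / m.factorial * m.factorial := by field_simp
      _ ≤ Real.exp (t ^ 2) * m.factorial := by
          exact mul_le_mul_of_nonneg_right this hm.le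
      _ = m.factorial * Real.exp (t ^ 2) := by ring
  have hkey : t ^ m ≤ m.factorial * Real.exp (t ^ 2) := by
    rcases le_or_gt t 1 with h1 | h1
    · have : t ^ m ≤ 1 := pow_le_one₀ ht h1
      have h2 : (1 : ℝ) ≤ m.factorial * Real.exp (t ^ 2) := by
        have : (1 : ℝ) ≤ (Nat.factorial m : ℝ) := by exact_mod_cast Nat.one_le_iff_ne_zero.mpr (Nat.factorial_ne_zero m)
        nlinarith [Real.one_le_exp (by positivity : (0:ℝ) ≤ t ^ 2)]
      linarith
    · have : t ^ m ≤ (t ^ 2) ^ m := by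
        rw [← pow_mul]
        exact pow_le_pow_right₀ h1.le (by omega)
      linarith
  have hpos : (0 : ℝ) < Real.exp (t ^ 2) := Real.exp_pos _
  rw [Real.exp_neg]
  rw [inv_mul_le_iff₀ hpos] at *
  linarith [hkey]

lemma norm_gradient_eq {n : ℕ} (f : EuclideanSpace ℝ (Fin n) → ℝ)
    (x : EuclideanSpace ℝ (Fin n)) : ‖gradient f x‖ = ‖fderiv ℝ f x‖ := by
  rw [gradient]
  exact LinearIsometryEquiv.norm_map _ _

lemma sqrt_le_one_add {a : ℝ} (ha : 0 ≤ a) : Real.sqrt a ≤ 1 + a := by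
  rcases le_or_gt a 1 with h | h
  · have : Real.sqrt a ≤ 1 := by rw [show (1:ℝ) = Real.sqrt 1 by simp]; exact Real.sqrt_le_sqrt h
    linarith
  · have : Real.sqrt a ≤ a := by
      rw [show a = Real.sqrt (a ^ 2) by rw [Real.sqrt_sq ha]]
      nth_rewrite 1 [Real.sqrt_sq ha] at *
      exact Real.sqrt_le_sqrt (by nlinarith)
    linarith

/-- Let `h` be `C¹` and bounded above by `M` on `C = {h ≥ 0}`, `F` a `C¹`
closed-loop vector field, and `h̄(x) = e^{−‖F(x)‖²} h(x)`.  Then `h̄` has the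
same zero-superlevel, strict superlevel, and zero level sets as `h`, its
derivative along `F` satisfies the stated product formula, and under the
polynomial bounds on `‖∇h‖²` and `‖∇(‖F‖²)‖²` the function
`x ↦ ∇h̄(x)ᵀF(x)` is bounded below on `C`. -/
theorem stmt12 (n : ℕ) (h : EuclideanSpace ℝ (Fin n) → ℝ)
    (F : EuclideanSpace ℝ (Fin n) → EuclideanSpace ℝ (Fin n))
    (hh : ContDiff ℝ 1 h) (hF : ContDiff ℝ 1 F)
    (M : ℝ) (hM : ∀ x, 0 ≤ h x → h x ≤ M)
    (N M₂ : ℕ) (b c : ℕ → ℝ) (hb : ∀ k, 0 ≤ b k) (hc : ∀ j, 0 ≤ c j)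
    (hgradh : ∀ x, 0 ≤ h x →
      ‖gradient h x‖^2 ≤ ∑ k ∈ range (N + 1), b k * ‖F x‖^k)
    (hgradF : ∀ x, 0 ≤ h x →
      ‖gradient (fun y => ‖F y‖^2) x‖^2 ≤ ∑ j ∈ range (M₂ + 1), c j * ‖F x‖^j) :
    {x | 0 ≤ exp (-‖F x‖^2) * h x} = {x | 0 ≤ h x} ∧
    {x | 0 < exp (-‖F x‖^2) * h x} = {x | 0 < h x} ∧
    {x | exp (-‖F x‖^2) * h x = 0} = {x | h x = 0} ∧
    (∀ x, 0 ≤ h x →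
      fderiv ℝ (fun y => exp (-‖F y‖^2) * h y) x (F x) =
        exp (-‖F x‖^2) *
          (fderiv ℝ h x (F x) -
            h x * fderiv ℝ (fun y => ‖F y‖^2) x (F x))) ∧
    ∃ B : ℝ, ∀ x, 0 ≤ h x →
      B ≤ fderiv ℝ (fun y => exp (-‖F y‖^2) * h y) x (F x) := by

  have hhd : Differentiable ℝ h := hh.differentiable one_ne_zero
  have hgc : ContDiff ℝ 1 (fun y => ‖F y‖^2) := hF.norm_sq (𝕜 := ℝ)
  have hgd : Differentiable ℝ (fun y => ‖F y‖^2) := hgc.differentiable one_ne_zero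
  have key : ∀ x, fderiv ℝ (fun y => exp (-‖F y‖^2) * h y) x (F x) =
      exp (-‖F x‖^2) * (fderiv ℝ h x (F x)
        - h x * fderiv ℝ (fun y => ‖F y‖^2) x (F x)) := by
    intro x
    have hgx : HasFDerivAt (fun y => ‖F y‖^2) (fderiv ℝ (fun y => ‖F y‖^2) x) x :=
      (hgd x).hasFDerivAt
    have hng : HasFDerivAt (fun y => -‖F y‖^2) (-(fderiv ℝ (fun y => ‖F y‖^2) x)) x := hgx.neg
    have hexp : HasFDerivAt (fun y => Real.exp (-‖F y‖^2))
        (Real.exp (-‖F x‖^2) • (-(fderiv ℝ (fun y => ‖F y‖^2) x))) x :=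
      hng.exp
    have hprod := hexp.mul ((hhd x).hasFDerivAt)
    rw [show (fun y => exp (-‖F y‖^2) * h y) = (fun y => exp (-‖F y‖^2)) * h from rfl, hprod.fderiv]
    simp only [ContinuousLinearMap.add_apply, ContinuousLinearMap.smul_apply,
      ContinuousLinearMap.neg_apply, smul_eq_mul]
    ring
  refine ⟨?_, ?_, ?_, fun x _ => key x, ?_⟩
  · ext x
    simp only [mem_setOf_eq]
    constructor <;> intro hx <;> nlinarith [Real.exp_pos (-‖F x‖^2)]
  · ext x
    simp only [mem_setOf_eq]
    constructor <;> intro hx <;> nlinarith [Real.exp_pos (-‖F x‖^2)]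
  · ext x
    simp only [mem_setOf_eq, mul_eq_zero, Real.exp_ne_zero, false_or]
  · refine ⟨-((1 + ∑ k ∈ range (N+1), b k * (k+1).factorial)
        + M * (1 + ∑ j ∈ range (M₂+1), c j * (j+1).factorial)), ?_⟩
    intro x hx
    rw [key x]
    have ht : (0:ℝ) ≤ ‖F x‖ := norm_nonneg _
    have hMnn : 0 ≤ M := le_trans hx (hM x hx)
    set t : ℝ := ‖F x‖ with htdef
    set P : ℝ := ∑ k ∈ range (N+1), b k * t^k with hPdef
    set Q : ℝ := ∑ j ∈ range (M₂+1), c j * t^j with hQdef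
    have hPnn : 0 ≤ P := le_trans (sq_nonneg _) (hgradh x hx)
    have hQnn : 0 ≤ Q := le_trans (sq_nonneg _) (hgradF x hx)
    have normBound : ∀ (f : EuclideanSpace ℝ (Fin n) → ℝ) (R : ℝ), 0 ≤ R →
        ‖gradient f x‖^2 ≤ R → |fderiv ℝ f x (F x)| ≤ (1 + R) * t := by
      intro f R hR hfR
      have h1 : |fderiv ℝ f x (F x)| ≤ ‖fderiv ℝ f x‖ * t := by
        simpa using (fderiv ℝ f x).le_opNorm (F x)
      have h2 : ‖fderiv ℝ f x‖ = ‖gradient f x‖ := (norm_gradient_eq f x).symm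
      have h3 : ‖gradient f x‖ ≤ Real.sqrt R := by
        rw [show ‖gradient f x‖ = Real.sqrt (‖gradient f x‖^2) from
          (Real.sqrt_sq (norm_nonneg _)).symm]
        exact Real.sqrt_le_sqrt hfR
      have h4 := sqrt_le_one_add hR
      have h5 : ‖fderiv ℝ f x‖ ≤ 1 + R := by rw [h2]; linarith
      calc |fderiv ℝ f x (F x)| ≤ ‖fderiv ℝ f x‖ * t := h1
        _ ≤ (1 + R) * t := mul_le_mul_of_nonneg_right h5 ht
    have hA := normBound h P hPnn (hgradh x hx)
    have hD := normBound (fun y => ‖F y‖^2) Q hQnn (hgradF x hx)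
    have hS : ∀ (m : ℕ) (a : ℕ → ℝ), (∀ k, 0 ≤ a k) →
        exp (-t^2) * ((1 + ∑ k ∈ range (m+1), a k * t^k) * t)
          ≤ 1 + ∑ k ∈ range (m+1), a k * (k+1).factorial := by
      intro m a ha
      have heq : exp (-t^2) * ((1 + ∑ k ∈ range (m+1), a k * t^k) * t)
          = exp (-t^2) * t^1 + ∑ k ∈ range (m+1), a k * (exp (-t^2) * t^(k+1)) := by
        rw [add_mul, one_mul, mul_add, Finset.sum_mul, Finset.mul_sum, pow_one]
        congr 1
        exact Finset.sum_congr rfl fun k _ => by ring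
      rw [heq]
      have h1 : exp (-t^2) * t^1 ≤ 1 := by
        have := exp_sq_pow_le 1 ht
        simpa [Nat.factorial] using this
      have h2 : ∑ k ∈ range (m+1), a k * (exp (-t^2) * t^(k+1))
          ≤ ∑ k ∈ range (m+1), a k * (k+1).factorial := by
        apply Finset.sum_le_sum
        intro k _
        exact mul_le_mul_of_nonneg_left (exp_sq_pow_le (k+1) ht) (ha k)
      linarith
    have hS1 := hS N b hb
    have hS2 := hS M₂ c hc
    set A : ℝ := fderiv ℝ h x (F x) with hAdef
    set D : ℝ := fderiv ℝ (fun y => ‖F y‖^2) x (F x) with hDdef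
    have hE : (0:ℝ) < exp (-t^2) := Real.exp_pos _
    have hlow : -((1 + P) * t) - M * ((1 + Q) * t) ≤ A - h x * D := by
      have l1 : -((1 + P) * t) ≤ A := by
        have := neg_abs_le A; linarith [hA]
      have l2 : h x * D ≤ M * ((1 + Q) * t) := by
        calc h x * D ≤ h x * |D| := mul_le_mul_of_nonneg_left (le_abs_self _) hx
          _ ≤ M * ((1 + Q) * t) :=
              mul_le_mul (hM x hx) hD (abs_nonneg _) hMnn
      linarith
    have hmain : exp (-t^2) * (-((1 + P) * t) - M * ((1 + Q) * t))
        ≤ exp (-t^2) * (A - h x * D) := mul_le_mul_of_nonneg_left hlow hE.le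
    have hexpand : exp (-t^2) * (-((1 + P) * t) - M * ((1 + Q) * t))
        = -(exp (-t^2) * ((1 + P) * t)) - M * (exp (-t^2) * ((1 + Q) * t)) := by ring
    rw [hexpand] at hmain
    have hMterm : M * (exp (-t^2) * ((1 + Q) * t))
        ≤ M * (1 + ∑ j ∈ range (M₂+1), c j * (j+1).factorial) :=
      mul_le_mul_of_nonneg_left hS2 hMnn
    linarith
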